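/- Let $A, B, X \in \mathbb{M}_n$ be such that the block matrix $M = \begin{bmatrix} A & X \\ X^* & B \end{bmatrix} \in \mathbb{M}_{2n}$ is positive semi-definite and $X$ is accretive, i.e. $\mathrm{Re}\,X = (X+X^*)/2$ is positive semi-definite. Then for every symmetric norm $\|\cdot\|$ one has $\| M \| \le \| A + B \| + \| \mathrm{Re}\,X \|$. -/

import Mathlib

open Matrix
open scoped ComplexOrder

/-- The absolute value `|Z| = (Zᴴ Z)^(1/2)` of a square complex matrix. -/
noncomputable def matAbs {m : Type*} [Fintype m] [DecidableEq m]
    (Z : Matrix m m ℂ) : Matrix m m ℂ :=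
  (Matrix.posSemidef_conjTranspose_mul_self Z).1.eigenvectorUnitary.1 *
    Matrix.diagonal (fun i => ((Real.sqrt ((Matrix.posSemidef_conjTranspose_mul_self Z).1.eigenvalues i) : ℝ) : ℂ)) *
    (star (Matrix.posSemidef_conjTranspose_mul_self Z).1.eigenvectorUnitary : Matrix m m ℂ)

/-- Functional calculus: apply `f : ℝ → ℝ` to the eigenvalues of a Hermitian matrix
(junk value `0` if the matrix is not Hermitian). -/
noncomputable def hermApply {m : Type*} [Fintype m] [DecidableEq m]
    (f : ℝ → ℝ) (S : Matrix m m ℂ) : Matrix m m ℂ :=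
  if hS : S.IsHermitian then
    (hS.eigenvectorUnitary : Matrix m m ℂ) *
      Matrix.diagonal (fun i => (f (hS.eigenvalues i) : ℂ)) *
      (star (hS.eigenvectorUnitary : Matrix m m ℂ))
  else 0

/-- Real power of a positive semi-definite matrix by functional calculus. -/
noncomputable def matPow {m : Type*} [Fintype m] [DecidableEq m]
    (S : Matrix m m ℂ) (p : ℝ) : Matrix m m ℂ :=
  hermApply (fun x => x ^ p) S

/-- A symmetric (unitarily invariant) norm on complex `m × m` matrices. -/
structure IsSymmetricNorm {m : Type*} [Fintype m] [DecidableEq m]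
    (N : Matrix m m ℂ → ℝ) : Prop where
  add_le : ∀ A B, N (A + B) ≤ N A + N B
  smul : ∀ (c : ℂ) (A), N (c • A) = ‖c‖ * N A
  eq_zero_of : ∀ A, N A = 0 → A = 0
  unitary_mul_left : ∀ (U : Matrix.unitaryGroup m ℂ) (A), N (U * A) = N A
  mul_unitary_right : ∀ (U : Matrix.unitaryGroup m ℂ) (A), N (A * U) = N A

/-- Eigenvalues of a Hermitian matrix (junk value `0` if not Hermitian). -/
noncomputable def eigVals {m : Type*} [Fintype m] [DecidableEq m]
    (Z : Matrix m m ℂ) : m → ℝ :=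
  if hZ : Z.IsHermitian then hZ.eigenvalues else 0

/-- Eigenvalues of a Hermitian `n × n` matrix listed in decreasing order. -/
noncomputable def eigDown {n : ℕ} (Z : Matrix (Fin n) (Fin n) ℂ) : Fin n → ℝ :=
  fun i => (eigVals Z ∘ Tuple.sort (eigVals Z)) i.rev

/-- `Z ^ ↓`: the diagonal matrix listing the eigenvalues of `Z` in decreasing order. -/
noncomputable def downMat {n : ℕ} (Z : Matrix (Fin n) (Fin n) ℂ) : Matrix (Fin n) (Fin n) ℂ :=
  Matrix.diagonal (fun i => (eigDown Z i : ℂ))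

/-- Schatten `p`-norm. -/
noncomputable def schattenNorm {m : Type*} [Fintype m] [DecidableEq m]
    (p : ℝ) (Z : Matrix m m ℂ) : ℝ :=
  (∑ i, eigVals (matAbs Z) i ^ p) ^ (1 / p)

/-- Operator norm (largest singular value). -/
noncomputable def opNormInf {m : Type*} [Fintype m] [DecidableEq m]
    (Z : Matrix m m ℂ) : ℝ :=
  ⨆ i, Real.sqrt (eigVals (Zᴴ * Z) i)

/-- Numerical range. -/
def numRange {m : Type*} [Fintype m] (X : Matrix m m ℂ) : Set ℂ :=
  {z | ∃ x : m → ℂ, ∑ i, ‖x i‖ ^ 2 = 1 ∧ dotProduct (star x) (X *ᵥ x) = z}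

/-- Numerical radius. -/
noncomputable def numRadius {m : Type*} [Fintype m] (X : Matrix m m ℂ) : ℝ :=
  sSup ((fun z : ℂ => ‖z‖) '' numRange X)

open scoped InnerProductSpace
open scoped MatrixOrder

lemma polar_exists {m : Type*} [Fintype m] [DecidableEq m] (Z : Matrix m m ℂ) :
    ∃ U : Matrix.unitaryGroup m ℂ,
      Z * Zᴴ = (U : Matrix m m ℂ) * (Zᴴ * Z) * star (U : Matrix m m ℂ) := by
  classical
  have hS : (Zᴴ * Z).PosSemidef := Matrix.posSemidef_conjTranspose_mul_self Z
  have hH : (Zᴴ * Z).IsHermitian := hS.1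
  set V : Matrix m m ℂ := (hH.eigenvectorUnitary : Matrix m m ℂ) with hVdef
  have hVmem : V ∈ Matrix.unitaryGroup m ℂ := hH.eigenvectorUnitary.2
  set e : m → ℝ := hH.eigenvalues with hedef
  have he0 : ∀ i, 0 ≤ e i := fun i => hS.eigenvalues_nonneg i
  set C : Matrix m m ℂ := Z * V with hCdef
  have hdiag : star V * (Zᴴ * Z) * V = Matrix.diagonal (RCLike.ofReal ∘ e) :=
    by have h := hH.conjStarAlgAut_star_eigenvectorUnitary; rwa [Unitary.conjStarAlgAut_star_apply] at h
  have hCC : Cᴴ * C = Matrix.diagonal (RCLike.ofReal ∘ e) := by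
    rw [hCdef, Matrix.conjTranspose_mul, ← hdiag, Matrix.star_eq_conjTranspose]
    rw [Matrix.mul_assoc, Matrix.mul_assoc, Matrix.mul_assoc]
  have key : ∀ i j, (∑ k, (starRingEnd ℂ) (C k i) * C k j)
      = if i = j then ((e i : ℝ) : ℂ) else 0 := by
    intro i j
    have h : (Cᴴ * C) i j = Matrix.diagonal (RCLike.ofReal ∘ e) i j := by rw [hCC]
    simpa [Matrix.mul_apply, Matrix.conjTranspose_apply, Matrix.diagonal_apply] using h
  set a : m → ℂ := fun j => (((Real.sqrt (e j))⁻¹ : ℝ) : ℂ) with hadef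
  set w : m → EuclideanSpace ℂ m := fun j => (WithLp.equiv 2 (m → ℂ)).symm (fun k => a j * C k j)
    with hwdef
  set s : Set m := {j | e j ≠ 0} with hsdef
  have horth : Orthonormal ℂ (s.restrict w) := by
    rw [orthonormal_iff_ite]
    rintro ⟨i, hi⟩ ⟨j, hj⟩
    have : ⟪s.restrict w ⟨i, hi⟩, s.restrict w ⟨j, hj⟩⟫_ℂ
        = (starRingEnd ℂ (a i) * a j) * ∑ k, (starRingEnd ℂ) (C k i) * C k j := by
      simp only [Set.restrict_apply, Set.restrict, hwdef, PiLp.inner_apply, RCLike.inner_apply,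
        WithLp.equiv_symm_apply, WithLp.ofLp_toLp, Finset.mul_sum]
      exact Finset.sum_congr rfl fun k _ => by rw [_root_.map_mul]; ring
    rw [this, key i j]
    by_cases hij : i = j
    · subst hij
      simp only [if_pos rfl, Subtype.mk.injEq, hadef, Complex.conj_ofReal, if_true,
        eq_self_iff_true]
      have hsq : Real.sqrt (e i) * Real.sqrt (e i) = e i := Real.mul_self_sqrt (he0 i)
      have hne : e i ≠ 0 := hi
      norm_cast
      rw [← mul_inv, hsq]
      exact inv_mul_cancel₀ hne
    · simp [hij, Subtype.mk.injEq]
  obtain ⟨b, hb⟩ := horth.exists_orthonormalBasis_extension_of_card_eq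
    (finrank_euclideanSpace (𝕜 := ℂ) (ι := m))
  set U₀ : Matrix m m ℂ := Matrix.of (fun k j => b j k) with hU₀def
  have hU₀mem : U₀ ∈ Matrix.unitaryGroup m ℂ := by
    rw [Matrix.mem_unitaryGroup_iff']
    ext i j
    have hip : ⟪b i, b j⟫_ℂ = if i = j then (1:ℂ) else 0 :=
      orthonormal_iff_ite.mp b.orthonormal i j
    have : (star U₀ * U₀) i j = ∑ k, (starRingEnd ℂ) (b i k) * (b j k) := by
      simp [Matrix.mul_apply, Matrix.star_apply, hU₀def, Matrix.one_apply, mul_comm]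
    rw [this, Matrix.one_apply, ← hip]
    simp [PiLp.inner_apply, RCLike.inner_apply]
    exact Finset.sum_congr rfl fun _ _ => mul_comm _ _
  have hCU : U₀ * Matrix.diagonal (fun j => ((Real.sqrt (e j) : ℝ) : ℂ)) = C := by
    ext k j
    rw [Matrix.mul_diagonal]
    by_cases hj : j ∈ s
    · have hbj : b j = w j := hb j hj
      have hne : Real.sqrt (e j) ≠ 0 := by
        rw [hsdef] at hj
        exact Real.sqrt_ne_zero'.mpr (lt_of_le_of_ne (he0 j) (Ne.symm hj))
      rw [hU₀def]
      show (b j k) * _ = C k j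
      rw [hbj, hwdef]
      simp only [WithLp.equiv_symm_apply, WithLp.ofLp_toLp, hadef]
      rw [mul_comm (_ * C k j)  _, ← mul_assoc]
      norm_cast
      rw [mul_inv_cancel₀ hne]
      norm_num
    · have hej : e j = 0 := by rw [hsdef] at hj; simpa using hj
      have hcol : C k j = 0 := by
        have h0 : (∑ l, (starRingEnd ℂ) (C l j) * C l j) = 0 := by
          rw [key j j, if_pos rfl, hej]; norm_num
        have h1 : (∑ l, (Complex.normSq (C l j) : ℂ)) = 0 := by
          rw [← h0]
          exact Finset.sum_congr rfl fun l _ => by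
            rw [Complex.normSq_eq_conj_mul_self]
        have h2 : (∑ l, Complex.normSq (C l j)) = 0 := by exact_mod_cast h1
        have h3 := (Finset.sum_eq_zero_iff_of_nonneg
          (fun l _ => Complex.normSq_nonneg (C l j))).mp h2 k (Finset.mem_univ k)
        exact Complex.normSq_eq_zero.mp h3
      rw [hej, hcol, Real.sqrt_zero]
      simp
  refine ⟨(⟨U₀, hU₀mem⟩ : Matrix.unitaryGroup m ℂ) * star (⟨V, hVmem⟩ : Matrix.unitaryGroup m ℂ), ?_⟩
  have hcoe : ((⟨U₀, hU₀mem⟩ * star (⟨V, hVmem⟩ : Matrix.unitaryGroup m ℂ) :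
      Matrix.unitaryGroup m ℂ) : Matrix m m ℂ) = U₀ * star V := rfl
  rw [hcoe]
  have hVV : V * star V = 1 := Matrix.mem_unitaryGroup_iff.mp hVmem
  have hZZ : Z * Zᴴ = C * Cᴴ := by
    rw [hCdef, Matrix.conjTranspose_mul, ← Matrix.mul_assoc, Matrix.mul_assoc Z V,
      ← Matrix.star_eq_conjTranspose V, hVV, Matrix.mul_one]
  have hdd : Matrix.diagonal (fun j => ((Real.sqrt (e j) : ℝ) : ℂ)) *
      (Matrix.diagonal (fun j => ((Real.sqrt (e j) : ℝ) : ℂ)))ᴴ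
      = Matrix.diagonal (RCLike.ofReal ∘ e) := by
    rw [Matrix.diagonal_conjTranspose, Matrix.diagonal_mul_diagonal]
    ext i j
    rcases eq_or_ne i j with rfl | h
    · simp only [Matrix.diagonal_apply_eq, Function.comp_apply, Pi.star_apply,
        RCLike.star_def, Complex.conj_ofReal]
      rw [← Complex.ofReal_mul, Real.mul_self_sqrt (he0 i)]
      rfl
    · simp [Matrix.diagonal_apply_ne _ h]
  have hCC' : C * Cᴴ = U₀ * (star V * (Zᴴ * Z) * V) * star U₀ := by
    rw [← hCU, Matrix.conjTranspose_mul, hdiag, ← Matrix.star_eq_conjTranspose U₀]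
    rw [Matrix.mul_assoc U₀, ← Matrix.mul_assoc _ _ (star U₀), hdd, ← Matrix.mul_assoc]
  rw [hZZ, hCC', StarMul.star_mul, star_star]
  simp only [Matrix.mul_assoc]

section helpers

variable {m : Type*} [Fintype m] [DecidableEq m] {N : Matrix m m ℂ → ℝ}

lemma norm_conj (hN : IsSymmetricNorm N) (U : Matrix.unitaryGroup m ℂ) (A : Matrix m m ℂ) :
    N ((U : Matrix m m ℂ) * A * star (U : Matrix m m ℂ)) = N A := by
  have hst : (star (U : Matrix m m ℂ)) = ((star U : Matrix.unitaryGroup m ℂ) : Matrix m m ℂ) := rfl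
  rw [Matrix.mul_assoc, hst, hN.unitary_mul_left U, hN.mul_unitary_right (star U)]

lemma norm_mul_conjT (hN : IsSymmetricNorm N) (Z : Matrix m m ℂ) :
    N (Z * Zᴴ) = N (Zᴴ * Z) := by
  obtain ⟨U, hU⟩ := polar_exists Z
  rw [hU, norm_conj hN]

lemma half_smul_add_self {α : Type*} [AddCommGroup α] [Module ℂ α] (x : α) :
    (1/2 : ℂ) • (x + x) = x := by
  rw [← two_smul ℂ, smul_smul]
  norm_num

lemma norm_half (hN : IsSymmetricNorm N) (Y Z : Matrix m m ℂ) :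
    N ((1/2 : ℂ) • (Y + Z)) ≤ (1/2 : ℝ) * (N Y + N Z) := by
  rw [hN.smul]
  have h1 : ‖(1/2 : ℂ)‖ = (1/2 : ℝ) := by norm_num
  rw [h1]
  have := hN.add_le Y Z
  nlinarith [hN.add_le Y Z]

end helpers

section blocks

variable {p : Type*} [Fintype p] [DecidableEq p] {N : Matrix (p ⊕ p) (p ⊕ p) ℂ → ℝ}

def Jmat (p : Type*) [Fintype p] [DecidableEq p] : Matrix (p ⊕ p) (p ⊕ p) ℂ :=
  Matrix.fromBlocks 1 0 0 (-1)

lemma Jmat_star : star (Jmat p) = Jmat p := by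
  rw [Matrix.star_eq_conjTranspose, Jmat, Matrix.fromBlocks_conjTranspose]
  simp

lemma Jmat_mem : Jmat p ∈ Matrix.unitaryGroup (p ⊕ p) ℂ := by
  rw [Matrix.mem_unitaryGroup_iff, Jmat_star]
  rw [Jmat, Matrix.fromBlocks_multiply, ← Matrix.fromBlocks_one]
  congr 1 <;> simp

lemma Jmat_conj (a b c d : Matrix p p ℂ) :
    Jmat p * Matrix.fromBlocks a b c d * Jmat p
      = Matrix.fromBlocks a (-b) (-c) d := by
  rw [Jmat, Matrix.fromBlocks_multiply, Matrix.fromBlocks_multiply]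
  congr 1 <;> simp

lemma pinch (hN : IsSymmetricNorm N) (a b c d : Matrix p p ℂ) :
    N (Matrix.fromBlocks a 0 0 d) ≤ N (Matrix.fromBlocks a b c d) := by
  have key : Matrix.fromBlocks a 0 0 d
      = (1/2 : ℂ) • (Matrix.fromBlocks a b c d
          + Jmat p * Matrix.fromBlocks a b c d * Jmat p) := by
    have h2 : ∀ (x : Matrix p p ℂ), (1/2:ℂ) • (x + x) = x := half_smul_add_self
    have h0 : ∀ (x : Matrix p p ℂ), (1/2:ℂ) • (x + -x) = 0 := fun x => by simp
    rw [Jmat_conj, Matrix.fromBlocks_add, Matrix.fromBlocks_smul, h2, h0, h0, h2]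
  rw [key]
  calc N ((1/2 : ℂ) • (Matrix.fromBlocks a b c d
          + Jmat p * Matrix.fromBlocks a b c d * Jmat p))
      ≤ (1/2 : ℝ) * (N (Matrix.fromBlocks a b c d)
          + N (Jmat p * Matrix.fromBlocks a b c d * Jmat p)) := norm_half hN _ _
    _ = N (Matrix.fromBlocks a b c d) := by
        nth_rewrite 2 [show Jmat p = star (Jmat p) from Jmat_star.symm]
        rw [norm_conj hN ⟨Jmat p, Jmat_mem⟩]
        ring

lemma drop_corner (hN : IsSymmetricNorm N) (a d : Matrix p p ℂ) :
    N (Matrix.fromBlocks a 0 0 0) ≤ N (Matrix.fromBlocks a 0 0 d) := by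
  have key : Matrix.fromBlocks a 0 0 (0 : Matrix p p ℂ)
      = (1/2 : ℂ) • (Matrix.fromBlocks a 0 0 d
          + Matrix.fromBlocks a 0 0 d * Jmat p) := by
    rw [Jmat, Matrix.fromBlocks_multiply, Matrix.fromBlocks_add, Matrix.fromBlocks_smul]
    have h2 : ∀ (x : Matrix p p ℂ), (1/2:ℂ) • (x + x) = x := half_smul_add_self
    have h0 : ∀ (x : Matrix p p ℂ), (1/2:ℂ) • (x + -x) = 0 := fun x => by simp
    simp only [Matrix.mul_one, Matrix.mul_zero, Matrix.zero_mul, Matrix.mul_neg, add_zero,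
      zero_add, neg_zero]
    rw [h2, h0]
    simp
  rw [key]
  calc N ((1/2 : ℂ) • (Matrix.fromBlocks a 0 0 d + Matrix.fromBlocks a 0 0 d * Jmat p))
      ≤ (1/2 : ℝ) * (N (Matrix.fromBlocks a 0 0 d)
          + N (Matrix.fromBlocks a 0 0 d * Jmat p)) := norm_half hN _ _
    _ = N (Matrix.fromBlocks a 0 0 d) := by
        rw [hN.mul_unitary_right ⟨Jmat p, Jmat_mem⟩]
        ring

def Pmat (p : Type*) [Fintype p] [DecidableEq p] : Matrix (p ⊕ p) (p ⊕ p) ℂ :=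
  Matrix.fromBlocks 0 1 1 0

lemma Pmat_star : star (Pmat p) = Pmat p := by
  rw [Matrix.star_eq_conjTranspose, Pmat, Matrix.fromBlocks_conjTranspose]
  simp

lemma Pmat_mem : Pmat p ∈ Matrix.unitaryGroup (p ⊕ p) ℂ := by
  rw [Matrix.mem_unitaryGroup_iff, Pmat_star]
  rw [Pmat, Matrix.fromBlocks_multiply, ← Matrix.fromBlocks_one]
  congr 1 <;> simp

lemma swap_corner (hN : IsSymmetricNorm N) (d : Matrix p p ℂ) :
    N (Matrix.fromBlocks 0 0 0 d) = N (Matrix.fromBlocks d 0 0 0) := by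
  have key : Pmat p * Matrix.fromBlocks (0 : Matrix p p ℂ) 0 0 d * star (Pmat p)
      = Matrix.fromBlocks d 0 0 0 := by
    rw [Pmat_star, Pmat, Matrix.fromBlocks_multiply, Matrix.fromBlocks_multiply]
    congr 1 <;> simp
  rw [← key, norm_conj hN ⟨Pmat p, Pmat_mem⟩]

lemma mono_corner (hN : IsSymmetricNorm N) (C D : Matrix p p ℂ)
    (hC : C.PosSemidef) (hD : D.PosSemidef) :
    N (Matrix.fromBlocks C 0 0 0) ≤ N (Matrix.fromBlocks (C + D) 0 0 0) := by
  set G := CFC.sqrt C with hGdef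
  set E := CFC.sqrt D with hEdef
  set K : Matrix (p ⊕ p) (p ⊕ p) ℂ := Matrix.fromBlocks G 0 E 0 with hKdef
  have hKT : Kᴴ = Matrix.fromBlocks G E 0 0 := by
    rw [hKdef, Matrix.fromBlocks_conjTranspose, (CFC.sqrt_nonneg C).posSemidef.1.eq, (CFC.sqrt_nonneg D).posSemidef.1.eq]
    simp [hGdef, hEdef]
  have hKK : Kᴴ * K = Matrix.fromBlocks (C + D) 0 0 0 := by
    rw [hKT, hKdef, Matrix.fromBlocks_multiply]
    congr 1 <;> simp [hGdef, hEdef, CFC.sqrt_mul_sqrt_self C hC.nonneg, CFC.sqrt_mul_sqrt_self D hD.nonneg]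
  have hKKT : K * Kᴴ = Matrix.fromBlocks C (G * E) (E * G) D := by
    rw [hKT, hKdef, Matrix.fromBlocks_multiply]
    congr 1 <;> simp [hGdef, hEdef, CFC.sqrt_mul_sqrt_self C hC.nonneg, CFC.sqrt_mul_sqrt_self D hD.nonneg]
  calc N (Matrix.fromBlocks C 0 0 0)
      ≤ N (Matrix.fromBlocks C 0 0 D) := drop_corner hN C D
    _ ≤ N (Matrix.fromBlocks C (G * E) (E * G) D) := pinch hN _ _ _ _
    _ = N (K * Kᴴ) := by rw [hKKT]
    _ = N (Kᴴ * K) := norm_mul_conjT hN K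
    _ = N (Matrix.fromBlocks (C + D) 0 0 0) := by rw [hKK]

end blocks

theorem accretive_norm_bound {n : ℕ} (A B X : Matrix (Fin n) (Fin n) ℂ)
    (hM : (Matrix.fromBlocks A X Xᴴ B).PosSemidef)
    (hX : ((1 / 2 : ℂ) • (X + Xᴴ)).PosSemidef)
    (N : Matrix (Fin n ⊕ Fin n) (Fin n ⊕ Fin n) ℂ → ℝ) (hN : IsSymmetricNorm N) :
    N (Matrix.fromBlocks A X Xᴴ B) ≤
      N (Matrix.fromBlocks (A + B) 0 0 0) +
        N (Matrix.fromBlocks ((1 / 2 : ℂ) • (X + Xᴴ)) 0 0 0) := by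
  classical
  set R : Matrix (Fin n) (Fin n) ℂ := (1 / 2 : ℂ) • (X + Xᴴ) with hRdef
  set P : Matrix (Fin n) (Fin n) ℂ := (1 / 2 : ℂ) • (A + B) with hPdef
  set M := Matrix.fromBlocks A X Xᴴ B with hMdef
  set c : ℂ := (((Real.sqrt 2)⁻¹ : ℝ) : ℂ) with hcdef
  have hcc : c * c = 1/2 := by
    rw [hcdef, ← Complex.ofReal_mul, ← mul_inv, Real.mul_self_sqrt (by norm_num : (0:ℝ) ≤ 2)]
    norm_num
  have hcstar : star c = c := Complex.conj_ofReal _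
  set W₀ : Matrix (Fin n ⊕ Fin n) (Fin n ⊕ Fin n) ℂ := Matrix.fromBlocks 1 1 (-1) 1 with hW₀def
  have hW₀T : W₀ᴴ = Matrix.fromBlocks 1 (-1) 1 1 := by
    rw [hW₀def, Matrix.fromBlocks_conjTranspose]
    simp
  set W : Matrix (Fin n ⊕ Fin n) (Fin n ⊕ Fin n) ℂ := c • W₀ with hWdef
  have hstarW : star W = c • W₀ᴴ := by
    rw [hWdef, star_smul, hcstar, Matrix.star_eq_conjTranspose]
  have hW22 : W₀ᴴ * W₀ = (2:ℂ) • (1 : Matrix (Fin n ⊕ Fin n) (Fin n ⊕ Fin n) ℂ) := by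
    rw [hW₀T, hW₀def, Matrix.fromBlocks_multiply, ← Matrix.fromBlocks_one,
      Matrix.fromBlocks_smul]
    congr 1 <;> simp [two_smul]
  have hWmem : W ∈ Matrix.unitaryGroup (Fin n ⊕ Fin n) ℂ := by
    rw [Matrix.mem_unitaryGroup_iff', hstarW, hWdef, Matrix.smul_mul, Matrix.mul_smul,
      smul_smul, hcc, hW22, smul_smul]
    norm_num
  set H : Matrix (Fin n ⊕ Fin n) (Fin n ⊕ Fin n) ℂ := W * M * star W with hHdef
  have hHps : H.PosSemidef := by
    rw [hHdef, Matrix.star_eq_conjTranspose]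
    exact hM.mul_mul_conjTranspose_same W
  have hNH : N H = N M := norm_conj hN ⟨W, hWmem⟩ M
  have hHblocks : H = Matrix.fromBlocks (P + R) ((1/2:ℂ) • (B - A + X - Xᴴ))
      ((1/2:ℂ) • (B - A - X + Xᴴ)) (P - R) := by
    rw [hHdef, hstarW, hWdef, Matrix.smul_mul, Matrix.mul_smul, Matrix.smul_mul, smul_smul, hcc,
      hW₀T, hW₀def, hMdef, Matrix.fromBlocks_multiply, Matrix.fromBlocks_multiply,
      Matrix.fromBlocks_smul]
    simp only [Matrix.one_mul, Matrix.mul_one, Matrix.neg_mul, Matrix.mul_neg]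
    rw [hPdef, hRdef, Matrix.fromBlocks_inj]
    refine ⟨by module, by module, by module, by module⟩
  have hH22psd : (P - R).PosSemidef := by
    have h := hHps.submatrix (Sum.inr : Fin n → Fin n ⊕ Fin n)
    rw [hHblocks] at h
    exact h
  set Q : Matrix (Fin n ⊕ Fin n) (Fin n ⊕ Fin n) ℂ := CFC.sqrt H with hQdef
  have hQps : Q.PosSemidef := (CFC.sqrt_nonneg H).posSemidef
  have hQherm : Qᴴ = Q := hQps.1.eq
  have hQQ : Q * Q = H := CFC.sqrt_mul_sqrt_self H hHps.nonneg
  set P₁ : Matrix (Fin n ⊕ Fin n) (Fin n ⊕ Fin n) ℂ := Matrix.fromBlocks 1 0 0 0 with hP₁def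
  set P₂ : Matrix (Fin n ⊕ Fin n) (Fin n ⊕ Fin n) ℂ := Matrix.fromBlocks 0 0 0 1 with hP₂def
  have hP₁T : P₁ᴴ = P₁ := by rw [hP₁def, Matrix.fromBlocks_conjTranspose]; simp
  have hP₂T : P₂ᴴ = P₂ := by rw [hP₂def, Matrix.fromBlocks_conjTranspose]; simp
  have hP₁idem : P₁ * P₁ = P₁ := by rw [hP₁def, Matrix.fromBlocks_multiply]; simp
  have hP₂idem : P₂ * P₂ = P₂ := by rw [hP₂def, Matrix.fromBlocks_multiply]; simp
  have hP₁₂ : P₁ + P₂ = 1 := by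
    rw [hP₁def, hP₂def, ← Matrix.fromBlocks_one]
    ext i j
    cases i <;> cases j <;> simp [Matrix.fromBlocks]
  have hsplit : H = Q * P₁ * Q + Q * P₂ * Q := by
    rw [← Matrix.add_mul, ← Matrix.mul_add, hP₁₂, Matrix.mul_one, hQQ]
  have key1 : ∀ (Pi : Matrix (Fin n ⊕ Fin n) (Fin n ⊕ Fin n) ℂ),
      Piᴴ = Pi → Pi * Pi = Pi → N (Q * Pi * Q) = N (Pi * H * Pi) := by
    intro Pi hT hidem
    have hZT : (Q * Pi)ᴴ = Pi * Q := by rw [Matrix.conjTranspose_mul, hQherm, hT]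
    have h1 : (Q * Pi) * (Q * Pi)ᴴ = Q * Pi * Q := by
      rw [hZT, Matrix.mul_assoc Q Pi, ← Matrix.mul_assoc Pi Pi, hidem, ← Matrix.mul_assoc]
    have h2 : (Q * Pi)ᴴ * (Q * Pi) = Pi * H * Pi := by
      rw [hZT, ← hQQ]
      simp only [Matrix.mul_assoc]
    rw [← h1, ← h2, norm_mul_conjT hN]
  have hB1 : P₁ * H * P₁ = Matrix.fromBlocks (P + R) 0 0 0 := by
    rw [hHblocks, hP₁def, Matrix.fromBlocks_multiply, Matrix.fromBlocks_multiply]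
    simp
  have hB2 : P₂ * H * P₂ = Matrix.fromBlocks 0 0 0 (P - R) := by
    rw [hHblocks, hP₂def, Matrix.fromBlocks_multiply, Matrix.fromBlocks_multiply]
    simp
  have step1 : N M ≤ N (Matrix.fromBlocks (P + R) 0 0 0)
      + N (Matrix.fromBlocks 0 0 0 (P - R)) := by
    rw [← hNH]
    calc N H = N (Q * P₁ * Q + Q * P₂ * Q) := by rw [← hsplit]
      _ ≤ N (Q * P₁ * Q) + N (Q * P₂ * Q) := hN.add_le _ _
      _ = N (Matrix.fromBlocks (P + R) 0 0 0) + N (Matrix.fromBlocks 0 0 0 (P - R)) := by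
          rw [key1 P₁ hP₁T hP₁idem, key1 P₂ hP₂T hP₂idem, hB1, hB2]
  have step2 : N (Matrix.fromBlocks (P + R) 0 0 0)
      ≤ N (Matrix.fromBlocks P 0 0 0) + N (Matrix.fromBlocks R 0 0 0) := by
    have heq : Matrix.fromBlocks P (0 : Matrix (Fin n) (Fin n) ℂ)
        (0 : Matrix (Fin n) (Fin n) ℂ) (0 : Matrix (Fin n) (Fin n) ℂ)
        + Matrix.fromBlocks R 0 0 0
        = Matrix.fromBlocks (P + R) (0 : Matrix (Fin n) (Fin n) ℂ)
        (0 : Matrix (Fin n) (Fin n) ℂ) (0 : Matrix (Fin n) (Fin n) ℂ) := by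
      rw [Matrix.fromBlocks_add]
      norm_num
    rw [← heq]
    exact hN.add_le _ _
  have step3 : N (Matrix.fromBlocks 0 0 0 (P - R)) ≤ N (Matrix.fromBlocks P 0 0 0) := by
    rw [swap_corner hN]
    have h := mono_corner hN (P - R) R hH22psd hX
    rwa [sub_add_cancel] at h
  have hAB : N (Matrix.fromBlocks (A + B) 0 0 0) = 2 * N (Matrix.fromBlocks P 0 0 0) := by
    have h2P : Matrix.fromBlocks (A + B) (0 : Matrix (Fin n) (Fin n) ℂ)
        (0 : Matrix (Fin n) (Fin n) ℂ) (0 : Matrix (Fin n) (Fin n) ℂ)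
        = (2:ℂ) • Matrix.fromBlocks P 0 0 0 := by
      rw [Matrix.fromBlocks_smul, hPdef, smul_smul]
      norm_num
    rw [h2P, hN.smul]
    norm_num
  have := step1.trans (by linarith [step2, step3] :
    N (Matrix.fromBlocks (P + R) 0 0 0) + N (Matrix.fromBlocks 0 0 0 (P - R))
      ≤ 2 * N (Matrix.fromBlocks P 0 0 0) + N (Matrix.fromBlocks R 0 0 0))
  rw [hAB]
  exact this
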